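/- If the link capacity tuple C = (C_e, e ∈ E) is achievable for a network with correlated sources (Y_s, s ∈ S), then there exists a polymatroid h on the ground set S ∪ E such that: (i) h(α) = H(Y_s, s ∈ α) for every α ⊆ S; (ii) h(e | {f ∈ S ∪ E : f → e}) = 0 for every e ∈ E; (iii) h(s | {s' ∈ S : u ∈ a(s')} ∪ {f ∈ E : f → u}) = 0 for every s ∈ S and every u ∈ b(s); and (iv) h(e) ≤ C_e for every e ∈ E. In other words, the achievable region R_cs is contained in the linear programming outer bound R_cs(Γ). -/

import Mathlib

open scoped BigOperators

/-- Probability of an event under a pmf `μ` on a finite outcome space. -/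
noncomputable def probOf {Ω : Type*} [Fintype Ω] (μ : Ω → ℝ) (E : Set Ω) : ℝ :=
  ∑ ω, E.indicator μ ω

/-- Shannon entropy (in bits) of the random variable `X` on the finite
probability space `(Ω, μ)`. -/
noncomputable def shEntropy {Ω : Type*} {S : Type*} [Fintype Ω] (μ : Ω → ℝ) (X : Ω → S) : ℝ :=
  ∑ ω, μ ω * (- Real.logb 2 (probOf μ {ω' | X ω' = X ω}))

/-- Conditional Shannon entropy `H(Y | X)` (in bits). -/
noncomputable def shCondEntropy {Ω S T : Type*} [Fintype Ω] (μ : Ω → ℝ)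
    (Y : Ω → T) (X : Ω → S) : ℝ :=
  shEntropy μ (fun ω => (X ω, Y ω)) - shEntropy μ X

/-- The support of the random variable `X` (values taken with positive probability). -/
noncomputable def rvSupport {Ω S : Type*} [Fintype Ω] (μ : Ω → ℝ) (X : Ω → S) : Finset S := by
  classical exact (Finset.univ.filter fun ω => 0 < μ ω).image X

/-- `μ` is a probability mass function. -/
def IsPMF {Ω : Type*} [Fintype Ω] (μ : Ω → ℝ) : Prop :=
  (∀ ω, 0 ≤ μ ω) ∧ ∑ ω, μ ω = 1

/-- A polymatroid on the finite ground set `Z`. -/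
def IsPolymatroid {Z : Type*} [DecidableEq Z] (h : Finset Z → ℝ) : Prop :=
  h ∅ = 0 ∧ (∀ A : Finset Z, 0 ≤ h A) ∧ (∀ A B : Finset Z, A ⊆ B → h A ≤ h B) ∧
    ∀ A B : Finset Z, h (A ∩ B) + h (A ∪ B) ≤ h A + h B

/-- A network: a directed acyclic graph with error-free point-to-point links,
source-location map `src` and demand map `snk`. Acyclicity is witnessed by a
topological ordering of the nodes. -/
structure Network (V S E : Type) where
  tail : E → V
  head : E → V
  src : S → Set V
  snk : S → Set V
  disj : ∀ s, src s ∩ snk s = ∅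
  ord : V → ℕ
  acyclic : ∀ e, ord (tail e) < ord (head e)

/-- A block-`N` network code: finite edge alphabets, global edge messages `g`
which are locally encodable (each edge message is a function of the source
blocks available at its tail and of the messages on incoming edges), and
decoding functions at every node. -/
structure NetworkCode {V S E : Type} (net : Network V S E) (𝒴 : S → Type) (N : ℕ) where
  U : E → Type
  fintU : ∀ e, Fintype (U e)
  g : (e : E) → ((s : S) → Fin N → 𝒴 s) → U e
  localEnc : ∀ e : E,
    ∃ φ : ((s : {s : S // net.tail e ∈ net.src s}) → Fin N → 𝒴 s.1) →
          ((f : {f : E // net.head f = net.tail e}) → U f.1) → U e,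
      ∀ y, g e y = φ (fun s => y s.1) (fun f => g f.1 y)
  dec : (s : S) → (u : V) →
    ((s' : {s' : S // u ∈ net.src s'}) → Fin N → 𝒴 s'.1) →
    ((f : {f : E // net.head f = u}) → U f.1) → (Fin N → 𝒴 s)

/-- The error probability at sink `u` for source `s`, when the sources are
i.i.d. (over time) with single-letter joint pmf `p`. -/
noncomputable def errProb {V S E : Type} [Fintype S] [DecidableEq S]
    (net : Network V S E) {𝒴 : S → Type} [∀ s, Fintype (𝒴 s)]
    (p : (∀ s, 𝒴 s) → ℝ) {N : ℕ} (code : NetworkCode net 𝒴 N) (s : S) (u : V) : ℝ :=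
  probOf (fun y : Fin N → (∀ s, 𝒴 s) => ∏ n, p (y n))
    {y | code.dec s u (fun s' n => y n s'.1)
          (fun f => code.g f.1 (fun s'' n => y n s'')) ≠ fun n => y n s}

/-- Achievability of a link capacity tuple `C`: there are block codes of
arbitrarily large blocklength whose rates are within `ε` of `C` and whose
error probabilities at all sinks are at most `ε`. -/
def Achievable {V S E : Type} [Fintype S] [DecidableEq S]
    (net : Network V S E) (𝒴 : S → Type) [∀ s, Fintype (𝒴 s)]
    (p : (∀ s, 𝒴 s) → ℝ) (C : E → ℝ) : Prop :=
  ∀ ε : ℝ, 0 < ε → ∃ N : ℕ, 0 < N ∧ ∃ code : NetworkCode net 𝒴 N,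
    (∀ e : E, Real.logb 2 (@Fintype.card (code.U e) (code.fintU e)) / N ≤ C e + ε) ∧
    ∀ s : S, ∀ u ∈ net.snk s, errProb net p code s u ≤ ε

/-- The ground-set elements `{f ∈ S ∪ E : f → e}` on which the message on edge
`e` must functionally depend. -/
noncomputable def inEdges {V S E : Type} [Fintype S] [Fintype E]
    [DecidableEq S] [DecidableEq E] (net : Network V S E) (e : E) : Finset (S ⊕ E) := by
  classical
  exact (Finset.univ.filter fun s : S => net.tail e ∈ net.src s).image Sum.inl ∪
    (Finset.univ.filter fun f : E => net.head f = net.tail e).image Sum.inr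

/-- The ground-set elements available at node `u`: sources located at `u` and
edges entering `u`. -/
noncomputable def atNode {V S E : Type} [Fintype S] [Fintype E]
    [DecidableEq S] [DecidableEq E] (net : Network V S E) (u : V) : Finset (S ⊕ E) := by
  classical
  exact (Finset.univ.filter fun s : S => u ∈ net.src s).image Sum.inl ∪
    (Finset.univ.filter fun f : E => net.head f = u).image Sum.inr

namespace NetLP
open Finset Real

variable {Ω : Type*} [Fintype Ω] {μ : Ω → ℝ}

noncomputable def pr (μ : Ω → ℝ) {S : Type*} (X : Ω → S) (v : S) : ℝ :=
  probOf μ {ω | X ω = v}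

lemma probOf_eq_sum (μ : Ω → ℝ) (E : Set Ω) [DecidablePred (· ∈ E)] :
    probOf μ E = ∑ ω ∈ Finset.univ.filter (fun ω => ω ∈ E), μ ω := by
  rw [probOf, Finset.sum_filter]
  exact Finset.sum_congr rfl fun ω _ => Set.indicator_apply _ _ _

lemma probOf_nonneg (h0 : ∀ ω, 0 ≤ μ ω) (E : Set Ω) : 0 ≤ probOf μ E := by
  classical
  rw [probOf_eq_sum]
  exact Finset.sum_nonneg fun ω _ => h0 ω

lemma probOf_mono (h0 : ∀ ω, 0 ≤ μ ω) {E F : Set Ω} (hEF : E ⊆ F) :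
    probOf μ E ≤ probOf μ F := by
  classical
  rw [probOf_eq_sum, probOf_eq_sum]
  refine Finset.sum_le_sum_of_subset_of_nonneg ?_ (fun ω _ _ => h0 ω)
  refine Finset.monotone_filter_right _ ?_
  intro ω _ hω; exact hEF hω

lemma probOf_le_one (h : IsPMF μ) (E : Set Ω) : probOf μ E ≤ 1 := by
  classical
  rw [probOf_eq_sum]
  calc ∑ ω ∈ Finset.univ.filter (fun ω => ω ∈ E), μ ω ≤ ∑ ω, μ ω :=
        Finset.sum_le_sum_of_subset_of_nonneg (Finset.filter_subset _ _) (fun ω _ _ => h.1 ω)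
    _ = 1 := h.2

lemma probOf_univ (h : IsPMF μ) : probOf μ (Set.univ : Set Ω) = 1 := by
  classical
  rw [probOf_eq_sum]
  simpa using h.2

lemma le_pr (h0 : ∀ ω, 0 ≤ μ ω) {S : Type*} (X : Ω → S) (ω : Ω) :
    μ ω ≤ pr μ X (X ω) := by
  classical
  rw [pr, probOf_eq_sum]
  exact Finset.single_le_sum (f := μ) (fun ω _ => h0 ω)
    (by simp : ω ∈ Finset.univ.filter (fun ω' => ω' ∈ {ω' | X ω' = X ω}))

lemma pr_nonneg (h0 : ∀ ω, 0 ≤ μ ω) {S : Type*} (X : Ω → S) (v : S) : 0 ≤ pr μ X v :=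
  probOf_nonneg h0 _

lemma pr_le_one (h : IsPMF μ) {S : Type*} (X : Ω → S) (v : S) : pr μ X v ≤ 1 :=
  probOf_le_one h _

lemma pr_pos (h0 : ∀ ω, 0 ≤ μ ω) {S : Type*} (X : Ω → S) {ω : Ω} (hω : 0 < μ ω) :
    0 < pr μ X (X ω) := lt_of_lt_of_le hω (le_pr h0 X ω)

lemma shEntropy_eq {S : Type*} (X : Ω → S) :
    shEntropy μ X = ∑ ω, μ ω * (- Real.logb 2 (pr μ X (X ω))) := rfl

lemma shEntropy_nonneg (h : IsPMF μ) {S : Type*} (X : Ω → S) : 0 ≤ shEntropy μ X := by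
  rw [shEntropy_eq]
  refine Finset.sum_nonneg fun ω _ => mul_nonneg (h.1 ω) ?_
  rw [neg_nonneg]
  exact Real.logb_nonpos (by norm_num) (pr_nonneg h.1 X _) (pr_le_one h X _)

/-- coarser random variables have smaller entropy -/
lemma shEntropy_le_of_coarser (h : IsPMF μ) {S T : Type*} {X : Ω → S} {Y : Ω → T}
    (hc : ∀ ω ω', X ω = X ω' → Y ω = Y ω') :
    shEntropy μ Y ≤ shEntropy μ X := by
  rw [shEntropy_eq, shEntropy_eq]
  refine Finset.sum_le_sum fun ω _ => ?_
  rcases eq_or_lt_of_le (h.1 ω) with hz | hpos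
  · simp [← hz]
  refine mul_le_mul_of_nonneg_left ?_ (h.1 ω)
  rw [neg_le_neg_iff]
  refine Real.logb_le_logb_of_le (by norm_num) (pr_pos h.1 X hpos) ?_
  exact probOf_mono h.1 (fun ω' (hω' : X ω' = X ω) => hc ω' ω hω')

lemma shEntropy_congr (h : IsPMF μ) {S T : Type*} {X : Ω → S} {Y : Ω → T}
    (hc : ∀ ω ω', X ω = X ω' ↔ Y ω = Y ω') :
    shEntropy μ X = shEntropy μ Y :=
  le_antisymm (shEntropy_le_of_coarser h (fun ω ω' h' => (hc ω ω').mpr h'))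
    (shEntropy_le_of_coarser h (fun ω ω' h' => (hc ω ω').mp h'))

lemma shEntropy_const (h : IsPMF μ) {S : Type*} (c : S) :
    shEntropy μ (fun _ => c) = 0 := by
  rw [shEntropy_eq]
  have : ∀ v, pr μ (fun (_ : Ω) => c) v = probOf μ {ω' | c = v} := fun v => rfl
  refine Finset.sum_eq_zero fun ω _ => ?_
  have : pr μ (fun (_ : Ω) => c) c = 1 := by
    rw [pr]
    simpa using probOf_univ h
  simp [this]

end NetLP

namespace NetLP
open Finset Real

variable {Ω : Type*} [Fintype Ω] {μ : Ω → ℝ}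

lemma pr_eq_sum_filter {S : Type*} [DecidableEq S] (X : Ω → S) (v : S) :
    pr μ X v = ∑ ω ∈ Finset.univ.filter (fun ω => X ω = v), μ ω := by
  classical
  rw [pr, probOf_eq_sum]
  rfl

/-- grouping a sum over outcomes by the value of `X`. -/
lemma sum_mul_comp {S : Type*} [DecidableEq S] (X : Ω → S) (f : S → ℝ) :
    ∑ ω, μ ω * f (X ω) = ∑ v ∈ Finset.univ.image X, pr μ X v * f v := by
  classical
  rw [← Finset.sum_fiberwise_of_maps_to (g := X) (t := Finset.univ.image X)
    (fun ω _ => Finset.mem_image_of_mem X (Finset.mem_univ ω)) (fun ω => μ ω * f (X ω))]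
  refine Finset.sum_congr rfl fun v hv => ?_
  rw [pr_eq_sum_filter, Finset.sum_mul]
  refine Finset.sum_congr rfl fun ω hω => ?_
  rw [(Finset.mem_filter.mp hω).2]

lemma sum_pr_le (h0 : ∀ ω, 0 ≤ μ ω) {S : Type*} [DecidableEq S] (X : Ω → S)
    (P : Finset S) (E : Set Ω) (hE : ∀ ω, X ω ∈ P → ω ∈ E) :
    ∑ v ∈ P, pr μ X v ≤ probOf μ E := by
  classical
  have hfil : ∀ v ∈ P, Finset.univ.filter (fun ω => X ω = v) =
      (Finset.univ.filter (fun ω => X ω ∈ P)).filter (fun ω => X ω = v) := by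
    intro v hv
    ext ω
    simp only [Finset.mem_filter, Finset.mem_univ, true_and]
    constructor
    · intro hx; exact ⟨hx ▸ hv, hx⟩
    · intro hx; exact hx.2
  have : ∑ v ∈ P, pr μ X v =
      ∑ ω ∈ Finset.univ.filter (fun ω => X ω ∈ P), μ ω := by
    rw [← Finset.sum_fiberwise_of_maps_to (g := X) (t := P)
      (fun ω hω => (Finset.mem_filter.mp hω).2) (fun ω => μ ω)]
    exact Finset.sum_congr rfl fun v hv => by rw [pr_eq_sum_filter, hfil v hv]
  rw [this, probOf_eq_sum]
  refine Finset.sum_le_sum_of_subset_of_nonneg ?_ (fun ω _ _ => h0 ω)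
  refine Finset.monotone_filter_right _ ?_
  intro ω _ hω; exact hE ω hω

/-- the key counting estimate behind submodularity of entropy -/
lemma sum_mul_ratio_le (h : IsPMF μ) {A B C : Type*} (X : Ω → A) (Y : Ω → B) (Z : Ω → C) :
    ∑ ω, μ ω * (pr μ (fun ω => (X ω, Z ω)) (X ω, Z ω) *
        pr μ (fun ω => (Y ω, Z ω)) (Y ω, Z ω) /
        (pr μ Z (Z ω) * pr μ (fun ω => (X ω, Y ω, Z ω)) (X ω, Y ω, Z ω))) ≤ 1 := by
  classical
  set XZ := fun ω => (X ω, Z ω) with hXZ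
  set YZ := fun ω => (Y ω, Z ω) with hYZ
  set T := fun ω => (X ω, Y ω, Z ω) with hT
  have hgroup := sum_mul_comp (μ := μ) T
    (fun v => pr μ XZ (v.1, v.2.2) * pr μ YZ (v.2.1, v.2.2) /
      (pr μ Z v.2.2 * pr μ T v))
  rw [hgroup]
  -- first reduction: cancel `pr μ T v`
  have step1 : ∀ v ∈ Finset.univ.image T,
      pr μ T v * (pr μ XZ (v.1, v.2.2) * pr μ YZ (v.2.1, v.2.2) /
        (pr μ Z v.2.2 * pr μ T v)) ≤
      pr μ XZ (v.1, v.2.2) * pr μ YZ (v.2.1, v.2.2) / pr μ Z v.2.2 := by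
    intro v _
    rcases eq_or_lt_of_le (pr_nonneg h.1 T v) with hz | hpos
    · rw [← hz, zero_mul]
      exact div_nonneg (mul_nonneg (pr_nonneg h.1 _ _) (pr_nonneg h.1 _ _)) (pr_nonneg h.1 _ _)
    · have hne : pr μ T v ≠ 0 := ne_of_gt hpos
      rcases eq_or_ne (pr μ Z v.2.2) 0 with hc | hc
      · simp [hc]
      · have heq : pr μ T v * (pr μ XZ (v.1, v.2.2) * pr μ YZ (v.2.1, v.2.2) /
            (pr μ Z v.2.2 * pr μ T v)) =
            pr μ XZ (v.1, v.2.2) * pr μ YZ (v.2.1, v.2.2) / pr μ Z v.2.2 := by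
          field_simp
        rw [heq]
  refine le_trans (Finset.sum_le_sum step1) ?_
  -- second reduction: group by the value of Z
  have hmaps : ∀ v ∈ Finset.univ.image T, v.2.2 ∈ Finset.univ.image Z := by
    intro v hv
    rcases Finset.mem_image.mp hv with ⟨ω, _, rfl⟩
    exact Finset.mem_image_of_mem Z (Finset.mem_univ ω)
  rw [← Finset.sum_fiberwise_of_maps_to (g := fun v => v.2.2) (t := Finset.univ.image Z) hmaps]
  have step2 : ∀ z ∈ Finset.univ.image Z,
      ∑ v ∈ (Finset.univ.image T).filter (fun v => v.2.2 = z),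
        pr μ XZ (v.1, v.2.2) * pr μ YZ (v.2.1, v.2.2) / pr μ Z v.2.2 ≤ pr μ Z z := by
    intro z _
    rcases eq_or_lt_of_le (pr_nonneg h.1 Z z) with hz | hpos
    · -- pr Z z = 0 : every summand is ≤ 0 (numerators are 0)
      rw [← hz]
      refine Finset.sum_nonpos fun v hv => ?_
      have hv2 : v.2.2 = z := (Finset.mem_filter.mp hv).2
      have hXZ0 : pr μ XZ (v.1, v.2.2) = 0 := by
        refine le_antisymm ?_ (pr_nonneg h.1 _ _)
        rw [hv2, hz]
        refine probOf_mono h.1 ?_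
        intro ω (hω : XZ ω = (v.1, z))
        exact congrArg Prod.snd hω
      rw [hXZ0, zero_mul, zero_div]
    · -- main case
      have hsum : ∑ v ∈ (Finset.univ.image T).filter (fun v => v.2.2 = z),
          pr μ XZ (v.1, v.2.2) * pr μ YZ (v.2.1, v.2.2) ≤ pr μ Z z * pr μ Z z := by
        have hsub : ((Finset.univ.image T).filter (fun v => v.2.2 = z)).image
            (fun v => ((v.1, v.2.2), (v.2.1, v.2.2))) ⊆
            (((Finset.univ.image XZ).filter (fun w => w.2 = z)) ×ˢ
             ((Finset.univ.image YZ).filter (fun w => w.2 = z))) := by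
          intro w hw
          rcases Finset.mem_image.mp hw with ⟨v, hv, rfl⟩
          rcases Finset.mem_image.mp (Finset.mem_filter.mp hv).1 with ⟨ω, _, rfl⟩
          have hz2 : Z ω = z := (Finset.mem_filter.mp hv).2
          refine Finset.mem_product.mpr ⟨?_, ?_⟩
          · exact Finset.mem_filter.mpr ⟨Finset.mem_image_of_mem XZ (Finset.mem_univ ω), hz2⟩
          · exact Finset.mem_filter.mpr ⟨Finset.mem_image_of_mem YZ (Finset.mem_univ ω), hz2⟩
        have hinj : Set.InjOn (fun v : A × B × C => ((v.1, v.2.2), (v.2.1, v.2.2)))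
            ((Finset.univ.image T).filter (fun v => v.2.2 = z)) := by
          intro a _ b _ hab
          simp only [Prod.mk.injEq] at hab
          exact Prod.ext hab.1.1 (Prod.ext hab.2.1 hab.1.2)
        calc ∑ v ∈ (Finset.univ.image T).filter (fun v => v.2.2 = z),
              pr μ XZ (v.1, v.2.2) * pr μ YZ (v.2.1, v.2.2)
            = ∑ w ∈ ((Finset.univ.image T).filter (fun v => v.2.2 = z)).image
                (fun v => ((v.1, v.2.2), (v.2.1, v.2.2))),
                pr μ XZ w.1 * pr μ YZ w.2 := by
              rw [Finset.sum_image (fun a ha b hb hab => hinj ha hb hab)]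
          _ ≤ ∑ w ∈ (((Finset.univ.image XZ).filter (fun w => w.2 = z)) ×ˢ
                ((Finset.univ.image YZ).filter (fun w => w.2 = z))),
                pr μ XZ w.1 * pr μ YZ w.2 :=
              Finset.sum_le_sum_of_subset_of_nonneg hsub
                (fun w _ _ => mul_nonneg (pr_nonneg h.1 _ _) (pr_nonneg h.1 _ _))
          _ = (∑ w ∈ (Finset.univ.image XZ).filter (fun w => w.2 = z), pr μ XZ w) *
              (∑ w ∈ (Finset.univ.image YZ).filter (fun w => w.2 = z), pr μ YZ w) := by
              rw [Finset.sum_mul_sum]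
              rw [Finset.sum_product]
          _ ≤ pr μ Z z * pr μ Z z := by
              refine mul_le_mul ?_ ?_ (Finset.sum_nonneg fun w _ => pr_nonneg h.1 _ _)
                (pr_nonneg h.1 _ _)
              · refine sum_pr_le h.1 XZ _ {ω | Z ω = z} ?_
                intro ω hω
                exact (Finset.mem_filter.mp hω).2
              · refine sum_pr_le h.1 YZ _ {ω | Z ω = z} ?_
                intro ω hω
                exact (Finset.mem_filter.mp hω).2
      calc ∑ v ∈ (Finset.univ.image T).filter (fun v => v.2.2 = z),
            pr μ XZ (v.1, v.2.2) * pr μ YZ (v.2.1, v.2.2) / pr μ Z v.2.2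
          = (∑ v ∈ (Finset.univ.image T).filter (fun v => v.2.2 = z),
            pr μ XZ (v.1, v.2.2) * pr μ YZ (v.2.1, v.2.2)) / pr μ Z z := by
            rw [Finset.sum_div]
            exact Finset.sum_congr rfl fun v hv => by rw [(Finset.mem_filter.mp hv).2]
        _ ≤ pr μ Z z * pr μ Z z / pr μ Z z := by
            exact div_le_div_of_nonneg_right hsum hpos.le
        _ = pr μ Z z := by field_simp
  refine le_trans (Finset.sum_le_sum step2) ?_
  have := sum_mul_comp (μ := μ) Z (fun _ => (1:ℝ))
  simp only [mul_one] at this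
  rw [← this, h.2]

end NetLP

namespace NetLP
open Finset Real

variable {Ω : Type*} [Fintype Ω] {μ : Ω → ℝ}

lemma shEntropy_submod (h : IsPMF μ) {A B C : Type*} (X : Ω → A) (Y : Ω → B) (Z : Ω → C) :
    shEntropy μ Z + shEntropy μ (fun ω => (X ω, Y ω, Z ω)) ≤
      shEntropy μ (fun ω => (X ω, Z ω)) + shEntropy μ (fun ω => (Y ω, Z ω)) := by
  classical
  have hlog2 : (0:ℝ) < Real.log 2 := Real.log_pos (by norm_num)
  set XZ := fun ω => (X ω, Z ω) with hXZdef
  set YZ := fun ω => (Y ω, Z ω) with hYZdef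
  set T := fun ω => (X ω, Y ω, Z ω) with hTdef
  set t : Ω → ℝ := fun ω =>
    pr μ XZ (XZ ω) * pr μ YZ (YZ ω) / (pr μ Z (Z ω) * pr μ T (T ω)) with htdef
  have key : ∑ ω, μ ω * t ω ≤ 1 := sum_mul_ratio_le h X Y Z
  have step : ∀ ω ∈ Finset.univ,
      μ ω * (- logb 2 (pr μ Z (Z ω))) + μ ω * (- logb 2 (pr μ T (T ω)))
      ≤ (μ ω * (- logb 2 (pr μ XZ (XZ ω))) + μ ω * (- logb 2 (pr μ YZ (YZ ω))))
        + μ ω * ((t ω - 1) / Real.log 2) := by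
    intro ω _
    rcases eq_or_lt_of_le (h.1 ω) with hz | hpos
    · rw [← hz]; simp
    · have ha := pr_pos h.1 XZ hpos
      have hb := pr_pos h.1 YZ hpos
      have hc := pr_pos h.1 Z hpos
      have hd := pr_pos h.1 T hpos
      have htpos : 0 < t ω := div_pos (mul_pos ha hb) (mul_pos hc hd)
      have hlog : Real.log (t ω) ≤ t ω - 1 := Real.log_le_sub_one_of_pos htpos
      have hexp : Real.log (t ω) = Real.log (pr μ XZ (XZ ω)) + Real.log (pr μ YZ (YZ ω))
          - Real.log (pr μ Z (Z ω)) - Real.log (pr μ T (T ω)) := by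
        rw [htdef]
        simp only
        rw [Real.log_div (by positivity) (by positivity), Real.log_mul ha.ne' hb.ne',
          Real.log_mul hc.ne' hd.ne']
        ring
      have hineq : logb 2 (pr μ XZ (XZ ω)) + logb 2 (pr μ YZ (YZ ω))
          - logb 2 (pr μ Z (Z ω)) - logb 2 (pr μ T (T ω)) ≤ (t ω - 1) / Real.log 2 := by
        unfold Real.logb
        rw [← add_div, div_sub_div_same, div_sub_div_same]
        refine div_le_div_of_nonneg_right ?_ hlog2.le
        rw [← hexp]; exact hlog
      have hmul := mul_le_mul_of_nonneg_left hineq hpos.le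
      nlinarith [hmul]
  have hsum := Finset.sum_le_sum step
  have eL : ∑ ω, (μ ω * (- logb 2 (pr μ Z (Z ω))) + μ ω * (- logb 2 (pr μ T (T ω)))) =
      (∑ ω, μ ω * (- logb 2 (pr μ Z (Z ω)))) + ∑ ω, μ ω * (- logb 2 (pr μ T (T ω))) :=
    Finset.sum_add_distrib
  have eR : ∑ ω, ((μ ω * (- logb 2 (pr μ XZ (XZ ω))) + μ ω * (- logb 2 (pr μ YZ (YZ ω)))) +
        μ ω * ((t ω - 1) / Real.log 2)) =
      ((∑ ω, μ ω * (- logb 2 (pr μ XZ (XZ ω)))) + ∑ ω, μ ω * (- logb 2 (pr μ YZ (YZ ω)))) +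
        ∑ ω, μ ω * ((t ω - 1) / Real.log 2) := by
    rw [Finset.sum_add_distrib, Finset.sum_add_distrib]
  rw [eL, eR] at hsum
  have hlast : ∑ ω, μ ω * ((t ω - 1) / Real.log 2) ≤ 0 := by
    have e : ∑ ω, μ ω * ((t ω - 1) / Real.log 2) =
        ((∑ ω, μ ω * t ω) - ∑ ω, μ ω) / Real.log 2 := by
      rw [← Finset.sum_sub_distrib, Finset.sum_div]
      exact Finset.sum_congr rfl fun ω _ => by ring
    rw [e, h.2]
    apply div_nonpos_of_nonpos_of_nonneg _ hlog2.le
    linarith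
  rw [shEntropy_eq, shEntropy_eq, shEntropy_eq, shEntropy_eq]
  linarith

lemma shEntropy_pair_unit (h : IsPMF μ) {A : Type*} (X : Ω → A) :
    shEntropy μ (fun ω => (X ω, ())) = shEntropy μ X :=
  shEntropy_congr h (fun ω ω' => by simp)

lemma shEntropy_subadd (h : IsPMF μ) {A B : Type*} (X : Ω → A) (Y : Ω → B) :
    shEntropy μ (fun ω => (X ω, Y ω)) ≤ shEntropy μ X + shEntropy μ Y := by
  have hsub := shEntropy_submod h X Y (fun _ => ())
  have h1 : shEntropy μ (fun (_ : Ω) => ()) = 0 := shEntropy_const h ()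
  have h2 : shEntropy μ (fun ω => (X ω, Y ω, ())) = shEntropy μ (fun ω => (X ω, Y ω)) :=
    shEntropy_congr h (fun ω ω' => by simp)
  have h3 : shEntropy μ (fun ω => (X ω, ())) = shEntropy μ X := shEntropy_pair_unit h X
  have h4 : shEntropy μ (fun ω => (Y ω, ())) = shEntropy μ Y := shEntropy_pair_unit h Y
  rw [h1, h2, h3, h4] at hsub
  linarith

/-- Fano-type estimate: if `Y` is determined by `X` whenever the "flag" `G` on the
value of `X` is off, then `H(X,Y) ≤ H(X) + P(G) · log₂ |B|`. -/
lemma shEntropy_pair_le (h : IsPMF μ) {A B : Type*} [Fintype B] (X : Ω → A) (Y : Ω → B)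
    (G : A → Prop) (hdet : ∀ ω ω', X ω = X ω' → ¬ G (X ω) → Y ω = Y ω') :
    shEntropy μ (fun ω => (X ω, Y ω)) ≤
      shEntropy μ X + probOf μ {ω | G (X ω)} * Real.logb 2 (Fintype.card B) := by
  classical
  have hlog2 : (0:ℝ) < Real.log 2 := Real.log_pos (by norm_num)
  have hΩ : Nonempty Ω := by
    by_contra hne
    rw [not_nonempty_iff] at hne
    have := h.2
    rw [Finset.univ_eq_empty, Finset.sum_empty] at this
    norm_num at this
  have hB : Nonempty B := ⟨Y (Classical.arbitrary Ω)⟩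
  have hM1 : (1:ℝ) ≤ (Fintype.card B : ℝ) := by
    exact_mod_cast Fintype.card_pos
  set M : ℝ := (Fintype.card B : ℝ) with hMdef
  have hM0 : 0 < M := lt_of_lt_of_le one_pos hM1
  have hlogM : 0 ≤ Real.logb 2 M := Real.logb_nonneg (by norm_num) hM1
  set XY := fun ω => (X ω, Y ω) with hXYdef
  set q := probOf μ {ω | G (X ω)} with hqdef
  have hq0 : 0 ≤ q := probOf_nonneg h.1 _
  -- the ratio of probabilities
  set r : Ω → ℝ := fun ω => pr μ X (X ω) / pr μ XY (XY ω) with hrdef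
  -- key counting bound
  have key : ∑ ω ∈ Finset.univ.filter (fun ω => G (X ω)), μ ω * r ω ≤ q * M := by
    set F : A × B → ℝ := fun v => if G v.1 then pr μ X v.1 / pr μ XY v else 0 with hFdef
    have hrewrite : ∑ ω ∈ Finset.univ.filter (fun ω => G (X ω)), μ ω * r ω =
        ∑ ω, μ ω * F (XY ω) := by
      rw [Finset.sum_filter]
      refine Finset.sum_congr rfl fun ω _ => ?_
      by_cases hG : G (X ω) <;> simp [hG, hrdef, hFdef, hXYdef]
    rw [hrewrite, sum_mul_comp XY F]
    have step1 : ∀ v ∈ (Finset.univ.image XY),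
        pr μ XY v * F v ≤ (if G v.1 then pr μ X v.1 else 0) := by
      intro v _
      by_cases hG : G v.1
      · simp only [hFdef, hG, if_true]
        rcases eq_or_lt_of_le (pr_nonneg h.1 XY v) with hz | hpos
        · rw [← hz, zero_mul]; exact pr_nonneg h.1 _ _
        · rw [mul_div_assoc', mul_comm, mul_div_assoc, div_self (ne_of_gt hpos), mul_one]
      · simp [hFdef, hG]
    refine le_trans (Finset.sum_le_sum step1) ?_
    rw [← Finset.sum_filter]
    -- now group the filtered image by the first coordinate
    set P := ((Finset.univ.image XY).filter (fun v => G v.1)).image Prod.fst with hPdef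
    have hmaps : ∀ v ∈ (Finset.univ.image XY).filter (fun v => G v.1), v.1 ∈ P :=
      fun v hv => Finset.mem_image_of_mem Prod.fst hv
    rw [← Finset.sum_fiberwise_of_maps_to (g := Prod.fst) (t := P) hmaps]
    have step2 : ∀ x ∈ P,
        ∑ v ∈ ((Finset.univ.image XY).filter (fun v => G v.1)).filter (fun v => v.1 = x),
          pr μ X v.1 ≤ M * pr μ X x := by
      intro x _
      have hconst : ∀ v ∈ ((Finset.univ.image XY).filter (fun v => G v.1)).filter
          (fun v => v.1 = x), pr μ X v.1 = pr μ X x := by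
        intro v hv; rw [(Finset.mem_filter.mp hv).2]
      rw [Finset.sum_congr rfl hconst, Finset.sum_const, nsmul_eq_mul]
      refine mul_le_mul_of_nonneg_right ?_ (pr_nonneg h.1 _ _)
      rw [hMdef]
      norm_cast
      refine Finset.card_le_card_of_injOn Prod.snd (fun v _ => Finset.mem_univ _) ?_
      intro a ha b hb hab
      have ha1 : a.1 = x := (Finset.mem_filter.mp ha).2
      have hb1 : b.1 = x := (Finset.mem_filter.mp hb).2
      exact Prod.ext (ha1.trans hb1.symm) hab
    refine le_trans (Finset.sum_le_sum step2) ?_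
    rw [← Finset.mul_sum]
    rw [mul_comm q M]
    refine mul_le_mul_of_nonneg_left ?_ hM0.le
    refine sum_pr_le h.1 X P {ω | G (X ω)} ?_
    intro ω hω
    rcases Finset.mem_image.mp hω with ⟨v, hv, hvx⟩
    have : G v.1 := (Finset.mem_filter.mp hv).2
    show G (X ω)
    rw [← hvx]
    exact this
  -- the mass of the flagged set
  have hqsum : ∑ ω ∈ Finset.univ.filter (fun ω => G (X ω)), μ ω = q := by
    rw [hqdef, probOf_eq_sum]
    rfl
  -- termwise entropy bound
  have step : ∀ ω ∈ Finset.univ,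
      μ ω * (- logb 2 (pr μ XY (XY ω))) ≤
      μ ω * (- logb 2 (pr μ X (X ω))) +
        (if G (X ω) then μ ω * Real.logb 2 M + μ ω * ((r ω - M) / (M * Real.log 2)) else 0) := by
    intro ω _
    rcases eq_or_lt_of_le (h.1 ω) with hz | hpos
    · rw [← hz]; by_cases hG : G (X ω) <;> simp [hG]
    · have ha := pr_pos h.1 X hpos
      have hb := pr_pos h.1 XY hpos
      by_cases hG : G (X ω)
      · simp only [hG, if_true]
        have hrpos : 0 < r ω := div_pos ha hb
        have hlog : Real.log (r ω / M) ≤ r ω / M - 1 :=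
          Real.log_le_sub_one_of_pos (div_pos hrpos hM0)
        have hexp : Real.log (r ω / M) = Real.log (pr μ X (X ω)) -
            Real.log (pr μ XY (XY ω)) - Real.log M := by
          rw [Real.log_div (ne_of_gt hrpos) (ne_of_gt hM0),
            Real.log_div (ne_of_gt ha) (ne_of_gt hb)]
        have hineq : logb 2 (pr μ X (X ω)) - logb 2 (pr μ XY (XY ω)) - logb 2 M ≤
            (r ω / M - 1) / Real.log 2 := by
          unfold Real.logb
          rw [div_sub_div_same, div_sub_div_same]
          refine div_le_div_of_nonneg_right ?_ hlog2.le
          rw [← hexp]; exact hlog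
        have hmul := mul_le_mul_of_nonneg_left hineq hpos.le
        have hre : (r ω / M - 1) / Real.log 2 = (r ω - M) / (M * Real.log 2) := by
          field_simp
        rw [hre] at hmul
        nlinarith [hmul]
      · have heq : pr μ XY (XY ω) = pr μ X (X ω) := by
          rw [pr, pr]
          congr 1
          ext ω'
          simp only [Set.mem_setOf_eq]
          constructor
          · intro hxy
            exact congrArg Prod.fst hxy
          · intro hx
            have hy : Y ω' = Y ω := hdet ω' ω hx (by rw [hx]; exact hG)
            rw [hXYdef]
            simp only
            rw [hx, hy]
        simp only [hG, if_false, add_zero, heq]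
        exact le_refl _
  have hsum := Finset.sum_le_sum step
  rw [Finset.sum_add_distrib] at hsum
  rw [shEntropy_eq, shEntropy_eq]
  have hlast : ∑ ω, (if G (X ω) then μ ω * Real.logb 2 M + μ ω * ((r ω - M) / (M * Real.log 2))
      else 0) ≤ q * Real.logb 2 M := by
    rw [← Finset.sum_filter, Finset.sum_add_distrib]
    have h1 : ∑ ω ∈ Finset.univ.filter (fun ω => G (X ω)), μ ω * Real.logb 2 M =
        q * Real.logb 2 M := by
      rw [← Finset.sum_mul, hqsum]
    have h2 : ∑ ω ∈ Finset.univ.filter (fun ω => G (X ω)),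
        μ ω * ((r ω - M) / (M * Real.log 2)) ≤ 0 := by
      have : ∑ ω ∈ Finset.univ.filter (fun ω => G (X ω)),
          μ ω * ((r ω - M) / (M * Real.log 2)) =
          ((∑ ω ∈ Finset.univ.filter (fun ω => G (X ω)), μ ω * r ω) - q * M) /
            (M * Real.log 2) := by
        rw [← hqsum, Finset.sum_mul, ← Finset.sum_sub_distrib, Finset.sum_div]
        refine Finset.sum_congr rfl fun ω _ => ?_
        ring
      rw [this]
      apply div_nonpos_of_nonpos_of_nonneg _ (le_of_lt (mul_pos hM0 hlog2))
      linarith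
    linarith
  linarith

lemma shEntropy_le_logb_card (h : IsPMF μ) {B : Type*} [Fintype B] (Y : Ω → B) :
    shEntropy μ Y ≤ Real.logb 2 (Fintype.card B) := by
  have hkey := shEntropy_pair_le h (fun _ => ()) Y (fun _ => True)
    (fun ω ω' _ hG => absurd trivial hG)
  have h1 : shEntropy μ (fun ω => ((), Y ω)) = shEntropy μ Y :=
    shEntropy_congr h (fun ω ω' => by simp)
  have h2 : shEntropy μ (fun (_ : Ω) => ()) = 0 := shEntropy_const h ()
  have h3 : probOf μ {ω : Ω | True} = 1 := by
    have : {ω : Ω | True} = Set.univ := by ext ω; simp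
    rw [this]; exact probOf_univ h
  rw [h1, h2, h3] at hkey
  linarith

end NetLP

namespace NetLP
open Finset Real

variable {Ω : Type*} [Fintype Ω] {μ : Ω → ℝ}

lemma shEntropy_bool_le (h : IsPMF μ) (B : Ω → Bool) {ε : ℝ}
    (hq : probOf μ {ω | B ω = true} ≤ ε) (hε0 : 0 ≤ ε) (hε : ε ≤ 1/2) :
    shEntropy μ B ≤ (2 * Real.sqrt ε + ε) / Real.log 2 := by
  classical
  have hlog2 : (0:ℝ) < Real.log 2 := Real.log_pos (by norm_num)
  set q := probOf μ {ω | B ω = true} with hqdef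
  have hq0 : 0 ≤ q := probOf_nonneg h.1 _
  have hq12 : q ≤ 1/2 := le_trans hq hε
  have h1q : (1:ℝ)/2 ≤ 1 - q := by linarith
  have h1q0 : 0 < 1 - q := by linarith
  -- the two fiber probabilities
  have hprt : pr μ B true = q := rfl
  have hprf : pr μ B false = 1 - q := by
    have hsplit : ∑ ω ∈ Finset.univ.filter (fun ω => B ω = true), μ ω +
        ∑ ω ∈ Finset.univ.filter (fun ω => ¬ (B ω = true)), μ ω = ∑ ω, μ ω :=
      Finset.sum_filter_add_sum_filter_not _ _ _
    have e1 : pr μ B false = ∑ ω ∈ Finset.univ.filter (fun ω => ¬ (B ω = true)), μ ω := by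
      rw [pr_eq_sum_filter]
      refine Finset.sum_congr ?_ (fun _ _ => rfl)
      ext ω
      simp [Bool.not_eq_true]
    have e2 : q = ∑ ω ∈ Finset.univ.filter (fun ω => B ω = true), μ ω := by
      rw [hqdef, probOf_eq_sum]; rfl
    rw [e1]
    rw [h.2] at hsplit
    rw [e2]
    linarith
  -- split the entropy sum
  rw [shEntropy_eq]
  have hsplit := Finset.sum_filter_add_sum_filter_not Finset.univ (fun ω => B ω = true)
    (fun ω => μ ω * (- logb 2 (pr μ B (B ω))))
  rw [← hsplit]
  have et : ∑ ω ∈ Finset.univ.filter (fun ω => B ω = true),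
      μ ω * (- logb 2 (pr μ B (B ω))) = q * (- logb 2 q) := by
    have : ∀ ω ∈ Finset.univ.filter (fun ω => B ω = true),
        μ ω * (- logb 2 (pr μ B (B ω))) = μ ω * (- logb 2 q) := by
      intro ω hω
      rw [(Finset.mem_filter.mp hω).2, hprt]
    rw [Finset.sum_congr rfl this, ← Finset.sum_mul]
    congr 1
    rw [hqdef, probOf_eq_sum]; rfl
  have ef : ∑ ω ∈ Finset.univ.filter (fun ω => ¬ (B ω = true)),
      μ ω * (- logb 2 (pr μ B (B ω))) = (1 - q) * (- logb 2 (1 - q)) := by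
    have : ∀ ω ∈ Finset.univ.filter (fun ω => ¬ (B ω = true)),
        μ ω * (- logb 2 (pr μ B (B ω))) = μ ω * (- logb 2 (1 - q)) := by
      intro ω hω
      have hb : B ω = false := by
        have := (Finset.mem_filter.mp hω).2
        exact Bool.not_eq_true _ ▸ (by simpa using this)
      rw [hb, hprf]
    rw [Finset.sum_congr rfl this, ← Finset.sum_mul]
    congr 1
    rw [← hprf, pr_eq_sum_filter]
    refine Finset.sum_congr ?_ (fun _ _ => rfl)
    ext ω
    simp [Bool.not_eq_true]
  rw [et, ef]
  -- bound the two pieces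
  have piece1 : q * (- logb 2 q) ≤ 2 * Real.sqrt ε / Real.log 2 := by
    have key : q * (- Real.log q) ≤ 2 * Real.sqrt ε := by
      rcases eq_or_lt_of_le hq0 with hz | hpos
      · rw [← hz]; simp
      · have hsq : 0 < Real.sqrt q := Real.sqrt_pos.mpr hpos
        have hlq : Real.log q = Real.log (Real.sqrt q) + Real.log (Real.sqrt q) := by
          conv_lhs => rw [← Real.mul_self_sqrt hq0]
          rw [Real.log_mul hsq.ne' hsq.ne']
        have hbound : Real.log (Real.sqrt q)⁻¹ ≤ (Real.sqrt q)⁻¹ - 1 :=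
          Real.log_le_sub_one_of_pos (by positivity)
        rw [Real.log_inv] at hbound
        have hkey2 : - Real.log q ≤ 2 / Real.sqrt q := by
          rw [hlq, div_eq_mul_inv]
          linarith
        have hmul := mul_le_mul_of_nonneg_left hkey2 hpos.le
        refine le_trans hmul ?_
        rw [mul_div_assoc']
        rw [mul_comm q 2, mul_div_assoc]
        have hdiv : q / Real.sqrt q = Real.sqrt q := Real.div_sqrt
        rw [hdiv]
        have : Real.sqrt q ≤ Real.sqrt ε := Real.sqrt_le_sqrt hq
        linarith
    rw [Real.logb, ← neg_div, ← mul_div_assoc]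
    exact div_le_div_of_nonneg_right key hlog2.le
  have piece2 : (1 - q) * (- logb 2 (1 - q)) ≤ ε / Real.log 2 := by
    have key : (1 - q) * (- Real.log (1 - q)) ≤ ε := by
      have hinv : - Real.log (1 - q) = Real.log (1 - q)⁻¹ := (Real.log_inv _).symm
      have hbound : Real.log (1 - q)⁻¹ ≤ (1 - q)⁻¹ - 1 :=
        Real.log_le_sub_one_of_pos (by positivity)
      have : (1 - q) * (- Real.log (1 - q)) ≤ (1 - q) * ((1 - q)⁻¹ - 1) := by
        rw [hinv]
        exact mul_le_mul_of_nonneg_left hbound h1q0.le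
      have e : (1 - q) * ((1 - q)⁻¹ - 1) = q := by
        field_simp
        ring
      rw [e] at this
      linarith [hq]
    rw [Real.logb, ← neg_div, ← mul_div_assoc]
    exact div_le_div_of_nonneg_right key hlog2.le
  have : (2 * Real.sqrt ε + ε) / Real.log 2 =
      2 * Real.sqrt ε / Real.log 2 + ε / Real.log 2 := by ring
  rw [this]
  exact add_le_add piece1 piece2

/-- entropy of an i.i.d. block equals `N` times the single-letter entropy. -/
lemma shEntropy_iid {Ω0 : Type*} [Fintype Ω0] {μ : Ω0 → ℝ} (h : IsPMF μ)
    {T : Type*} (X : Ω0 → T) (N : ℕ) :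
    shEntropy (fun y : Fin N → Ω0 => ∏ n, μ (y n)) (fun y (n : Fin N) => X (y n)) =
      N * shEntropy μ X := by
  classical
  set μN : (Fin N → Ω0) → ℝ := fun y => ∏ n, μ (y n) with hμN
  set XN : (Fin N → Ω0) → (Fin N → T) := fun y n => X (y n) with hXN
  -- factorization of the fiber probability
  have hfact : ∀ y : Fin N → Ω0, pr μN XN (XN y) = ∏ n, pr μ X (X (y n)) := by
    intro y
    rw [pr_eq_sum_filter]
    have hthis : ∀ y' : Fin N → Ω0,
        (if XN y' = XN y then μN y' else 0) =
        ∏ n, (if X (y' n) = X (y n) then μ (y' n) else 0) := by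
      intro y'
      rw [Finset.prod_ite_zero]
      by_cases hP : XN y' = XN y
      · rw [if_pos hP, if_pos (fun n _ => congrFun hP n)]
      · rw [if_neg hP, if_neg (fun hc => hP (funext fun n => hc n (Finset.mem_univ n)))]
    rw [Finset.sum_filter, Finset.sum_congr rfl (fun y' _ => hthis y')]
    have hswap := Finset.prod_univ_sum (t := fun _ : Fin N => (Finset.univ : Finset Ω0))
      (f := fun n x => if X x = X (y n) then μ x else 0)
    rw [Fintype.piFinset_univ] at hswap
    rw [← hswap]
    refine Finset.prod_congr rfl fun n _ => ?_
    rw [pr_eq_sum_filter, Finset.sum_filter]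
  rw [shEntropy_eq, shEntropy_eq]
  have hterm : ∀ y : Fin N → Ω0,
      μN y * (- logb 2 (pr μN XN (XN y))) =
      ∑ n, μN y * (- logb 2 (pr μ X (X (y n)))) := by
    intro y
    rcases eq_or_ne (μN y) 0 with hz | hnz
    · rw [hz]; simp
    · have hpos : ∀ n, 0 < μ (y n) := by
        intro n
        rcases eq_or_lt_of_le (h.1 (y n)) with hz' | hp
        · exfalso; apply hnz; rw [hμN]
          exact Finset.prod_eq_zero (Finset.mem_univ n) hz'.symm
        · exact hp
      have hfac : ∀ n, pr μ X (X (y n)) ≠ 0 := fun n => (pr_pos h.1 X (hpos n)).ne'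
      rw [hfact y, Real.logb, Real.log_prod (fun n _ => hfac n)]
      rw [Finset.sum_div, ← Finset.sum_neg_distrib, Finset.mul_sum]
      exact Finset.sum_congr rfl fun n _ => by rw [Real.logb]
  rw [Finset.sum_congr rfl (fun y _ => hterm y), Finset.sum_comm]
  have hmarg : ∀ n : Fin N, ∑ y : Fin N → Ω0, μN y * (- logb 2 (pr μ X (X (y n)))) =
      ∑ x, μ x * (- logb 2 (pr μ X (X x))) := by
    intro n
    have hswap := Finset.prod_univ_sum (t := fun _ : Fin N => (Finset.univ : Finset Ω0))
      (f := fun m x => μ x * (if m = n then - logb 2 (pr μ X (X x)) else 1))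
    rw [Fintype.piFinset_univ] at hswap
    have hL : ∏ m : Fin N, ∑ x, μ x * (if m = n then - logb 2 (pr μ X (X x)) else 1) =
        ∑ x, μ x * (- logb 2 (pr μ X (X x))) := by
      have hcc : ∀ m : Fin N, ∑ x, μ x * (if m = n then - logb 2 (pr μ X (X x)) else 1) =
          if m = n then ∑ x, μ x * (- logb 2 (pr μ X (X x))) else 1 := by
        intro m
        by_cases hmn : m = n
        · simp [hmn]
        · simp [hmn, h.2]
      rw [Finset.prod_congr rfl (fun m _ => hcc m),
        Finset.prod_ite_eq' Finset.univ n
          (fun _ => ∑ x, μ x * (- logb 2 (pr μ X (X x))))]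
      simp
    have hR : ∀ y : Fin N → Ω0,
        ∏ m : Fin N, (μ (y m) * (if m = n then - logb 2 (pr μ X (X (y m))) else 1)) =
        μN y * (- logb 2 (pr μ X (X (y n)))) := by
      intro y
      rw [Finset.prod_mul_distrib,
        Finset.prod_ite_eq' Finset.univ n (fun m => - logb 2 (pr μ X (X (y m))))]
      simp [hμN]
    rw [← hL, hswap]
    exact Finset.sum_congr rfl fun y _ => (hR y).symm
  rw [Finset.sum_congr rfl (fun n _ => hmarg n), Finset.sum_const, Finset.card_univ,
    Fintype.card_fin, nsmul_eq_mul]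

end NetLP

namespace NetLP
open Finset Real

variable {V S E : Type} [Fintype S] [DecidableEq S] {𝒴 : S → Type} [∀ s, Fintype (𝒴 s)]

/-- the i.i.d. block pmf -/
noncomputable def blockPMF (p : (∀ s, 𝒴 s) → ℝ) (N : ℕ) : (Fin N → ∀ s, 𝒴 s) → ℝ :=
  fun y => ∏ n, p (y n)

lemma blockPMF_isPMF {p : (∀ s, 𝒴 s) → ℝ} (hp : IsPMF p) (N : ℕ) :
    IsPMF (blockPMF p N) := by
  classical
  constructor
  · intro y
    exact Finset.prod_nonneg fun n _ => hp.1 (y n)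
  · have hswap := Finset.prod_univ_sum (t := fun _ : Fin N => (Finset.univ : Finset (∀ s, 𝒴 s)))
      (f := fun _ x => p x)
    rw [Fintype.piFinset_univ] at hswap
    calc ∑ y : Fin N → ∀ s, 𝒴 s, blockPMF p N y
        = ∏ _n : Fin N, ∑ x, p x := hswap.symm
      _ = 1 := by rw [hp.2]; exact Finset.prod_const_one

/-- the alphabet observed at a ground-set element -/
def obsT {V : Type} {net : Network V S E} {N : ℕ} (code : NetworkCode net 𝒴 N) :
    S ⊕ E → Type
  | Sum.inl s => Fin N → 𝒴 s
  | Sum.inr e => code.U e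

/-- the random variable observed at a ground-set element -/
def obs {V : Type} {net : Network V S E} {N : ℕ} (code : NetworkCode net 𝒴 N) :
    (z : S ⊕ E) → (Fin N → ∀ s, 𝒴 s) → obsT code z
  | Sum.inl s => fun y n => y n s
  | Sum.inr e => fun y => code.g e (fun s' n => y n s')

/-- the joint random variable observed on a subset of the ground set -/
def XA {V : Type} {net : Network V S E} {N : ℕ} (code : NetworkCode net 𝒴 N)
    (A : Finset (S ⊕ E)) (y : Fin N → ∀ s, 𝒴 s) :
    ∀ z : {z : S ⊕ E // z ∈ A}, obsT code z.1 :=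
  fun z => obs code z.1 y

lemma XA_eq_iff {V : Type} {net : Network V S E} {N : ℕ} {code : NetworkCode net 𝒴 N}
    {A : Finset (S ⊕ E)} {y y' : Fin N → ∀ s, 𝒴 s} :
    XA code A y = XA code A y' ↔ ∀ z ∈ A, obs code z y = obs code z y' := by
  constructor
  · intro h z hz
    exact congrFun h ⟨z, hz⟩
  · intro h
    funext z
    exact h z.1 z.2

/-- normalized entropy of the variables on a subset of the ground set -/
noncomputable def HN {V : Type} {net : Network V S E} {N : ℕ} (code : NetworkCode net 𝒴 N)
    (p : (∀ s, 𝒴 s) → ℝ) (A : Finset (S ⊕ E)) : ℝ :=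
  shEntropy (blockPMF p N) (XA code A)

section Master

variable {V : Type} [Fintype E] [DecidableEq E]
  {net : Network V S E} {N : ℕ} {code : NetworkCode net 𝒴 N}
  {p : (∀ s, 𝒴 s) → ℝ}

lemma HN_coarser (hp : IsPMF p) {A B : Finset (S ⊕ E)} (hAB : A ⊆ B) :
    HN code p A ≤ HN code p B := by
  refine shEntropy_le_of_coarser (blockPMF_isPMF hp N) ?_
  intro y y' hyy
  rw [XA_eq_iff] at hyy ⊢
  intro z hz
  exact hyy z (hAB hz)

lemma HN_empty (hp : IsPMF p) : HN code p (∅ : Finset (S ⊕ E)) = 0 := by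
  have hc : shEntropy (blockPMF p N) (XA code (∅ : Finset (S ⊕ E))) =
      shEntropy (blockPMF p N) (fun _ => ()) := by
    refine shEntropy_congr (blockPMF_isPMF hp N) ?_
    intro y y'
    constructor
    · intro _; rfl
    · intro _
      funext z
      exact absurd z.2 (Finset.notMem_empty z.1)
  rw [HN, hc, shEntropy_const (blockPMF_isPMF hp N)]

lemma HN_nonneg (hp : IsPMF p) (A : Finset (S ⊕ E)) : 0 ≤ HN code p A :=
  shEntropy_nonneg (blockPMF_isPMF hp N) _

lemma HN_pair (hp : IsPMF p) (A B : Finset (S ⊕ E)) :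
    shEntropy (blockPMF p N) (fun y => (XA code A y, XA code B y)) = HN code p (A ∪ B) := by
  refine shEntropy_congr (blockPMF_isPMF hp N) ?_
  intro y y'
  simp only [Prod.mk.injEq, XA_eq_iff]
  constructor
  · rintro ⟨h1, h2⟩ z hz
    rcases Finset.mem_union.mp hz with hz | hz
    · exact h1 z hz
    · exact h2 z hz
  · intro h
    exact ⟨fun z hz => h z (Finset.mem_union_left _ hz),
      fun z hz => h z (Finset.mem_union_right _ hz)⟩

lemma HN_submod (hp : IsPMF p) (A B : Finset (S ⊕ E)) :
    HN code p (A ∩ B) + HN code p (A ∪ B) ≤ HN code p A + HN code p B := by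
  have hμ := blockPMF_isPMF hp N
  have hsub := shEntropy_submod hμ (XA code A) (XA code B) (XA code (A ∩ B))
  -- identify the four entropies
  have e1 : shEntropy (blockPMF p N) (fun y => (XA code A y, XA code (A ∩ B) y)) =
      HN code p A := by
    refine shEntropy_congr hμ ?_
    intro y y'
    simp only [Prod.mk.injEq, XA_eq_iff]
    constructor
    · rintro ⟨h1, _⟩; exact h1
    · intro h
      exact ⟨h, fun z hz => h z (Finset.mem_of_mem_inter_left hz)⟩
  have e2 : shEntropy (blockPMF p N) (fun y => (XA code B y, XA code (A ∩ B) y)) =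
      HN code p B := by
    refine shEntropy_congr hμ ?_
    intro y y'
    simp only [Prod.mk.injEq, XA_eq_iff]
    constructor
    · rintro ⟨h1, _⟩; exact h1
    · intro h
      exact ⟨h, fun z hz => h z (Finset.mem_of_mem_inter_right hz)⟩
  have e3 : shEntropy (blockPMF p N) (fun y => (XA code A y, XA code B y, XA code (A ∩ B) y)) =
      HN code p (A ∪ B) := by
    refine shEntropy_congr hμ ?_
    intro y y'
    simp only [Prod.mk.injEq, XA_eq_iff]
    constructor
    · rintro ⟨h1, h2, _⟩ z hz
      rcases Finset.mem_union.mp hz with hz | hz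
      · exact h1 z hz
      · exact h2 z hz
    · intro h
      refine ⟨fun z hz => h z (Finset.mem_union_left _ hz),
        fun z hz => h z (Finset.mem_union_right _ hz),
        fun z hz => h z (Finset.mem_union_left _ (Finset.mem_of_mem_inter_left hz))⟩
  rw [e1, e2, e3] at hsub
  calc HN code p (A ∩ B) + HN code p (A ∪ B)
      = shEntropy (blockPMF p N) (XA code (A ∩ B)) + HN code p (A ∪ B) := rfl
    _ ≤ HN code p A + HN code p B := hsub

/-- value on source subsets -/
lemma HN_sources (hp : IsPMF p) (α : Finset S) :
    HN code p ((α.image Sum.inl : Finset (S ⊕ E))) =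
      N * shEntropy p (fun y (s : {x // x ∈ α}) => y s.1) := by
  have hμ := blockPMF_isPMF hp N
  have hiid := shEntropy_iid hp (fun (ω : ∀ s, 𝒴 s) (s : {x // x ∈ α}) => ω s.1) N
  rw [← hiid]
  refine shEntropy_congr hμ ?_
  intro y y'
  rw [XA_eq_iff]
  constructor
  · intro h
    funext n s
    have hmem : Sum.inl s.1 ∈ (α.image Sum.inl : Finset (S ⊕ E)) :=
      Finset.mem_image_of_mem _ s.2
    have := h (Sum.inl s.1) hmem
    exact congrFun (show (fun n => y n s.1) = (fun n => y' n s.1) from this) n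
  · intro h z hz
    rcases Finset.mem_image.mp hz with ⟨s, hs, rfl⟩
    show (fun n => y n s) = (fun n => y' n s)
    funext n
    have := congrFun h n
    exact congrFun this ⟨s, hs⟩

lemma mem_inEdges_inl {e : E} {s : S} (h : net.tail e ∈ net.src s) :
    Sum.inl s ∈ inEdges net e := by
  classical
  rw [inEdges]
  exact Finset.mem_union_left _
    (Finset.mem_image_of_mem _ (Finset.mem_filter.mpr ⟨Finset.mem_univ _, h⟩))

lemma mem_inEdges_inr {e f : E} (h : net.head f = net.tail e) :
    Sum.inr f ∈ inEdges net e := by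
  classical
  rw [inEdges]
  exact Finset.mem_union_right _
    (Finset.mem_image_of_mem _ (Finset.mem_filter.mpr ⟨Finset.mem_univ _, h⟩))

lemma mem_atNode_inl {u : V} {s : S} (h : u ∈ net.src s) :
    Sum.inl s ∈ atNode net u := by
  classical
  rw [atNode]
  exact Finset.mem_union_left _
    (Finset.mem_image_of_mem _ (Finset.mem_filter.mpr ⟨Finset.mem_univ _, h⟩))

lemma mem_atNode_inr {u : V} {f : E} (h : net.head f = u) :
    Sum.inr f ∈ atNode net u := by
  classical
  rw [atNode]
  exact Finset.mem_union_right _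
    (Finset.mem_image_of_mem _ (Finset.mem_filter.mpr ⟨Finset.mem_univ _, h⟩))

/-- encoding constraint -/
lemma HN_encode (hp : IsPMF p) (e : E) :
    HN code p (insert (Sum.inr e) (inEdges net e)) = HN code p (inEdges net e) := by
  have hμ := blockPMF_isPMF hp N
  refine shEntropy_congr hμ ?_
  intro y y'
  rw [XA_eq_iff, XA_eq_iff]
  constructor
  · intro h z hz
    exact h z (Finset.mem_insert_of_mem hz)
  · intro h z hz
    rcases Finset.mem_insert.mp hz with rfl | hz
    · -- use local encodability
      obtain ⟨φ, hφ⟩ := code.localEnc e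
      show code.g e (fun s' n => y n s') = code.g e (fun s' n => y' n s')
      rw [hφ, hφ]
      congr 1
      · funext s'
        have hmem : Sum.inl s'.1 ∈ inEdges net e := mem_inEdges_inl s'.2
        exact h (Sum.inl s'.1) hmem
      · funext f
        have hmem : Sum.inr f.1 ∈ inEdges net e := mem_inEdges_inr f.2
        exact h (Sum.inr f.1) hmem
    · exact h z hz

/-- rate constraint -/
lemma HN_rate (hp : IsPMF p) (e : E) :
    HN code p {Sum.inr e} ≤
      Real.logb 2 (@Fintype.card (code.U e) (code.fintU e)) := by
  classical
  have hμ := blockPMF_isPMF hp N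
  letI : Fintype (code.U e) := code.fintU e
  have hcg : HN code p {Sum.inr e} =
      shEntropy (blockPMF p N) (fun y => code.g e (fun s' n => y n s')) := by
    refine shEntropy_congr hμ ?_
    intro y y'
    rw [XA_eq_iff]
    constructor
    · intro h
      exact h (Sum.inr e) (Finset.mem_singleton_self _)
    · intro h z hz
      rw [Finset.mem_singleton.mp hz]
      exact h
  rw [hcg]
  exact shEntropy_le_logb_card hμ _

/-- decoding (Fano) estimate -/
lemma HN_decode (hp : IsPMF p) (hN0 : 0 < N) (s : S) (u : V)
    {ε : ℝ} (hε0 : 0 ≤ ε) (hε2 : ε ≤ 1/2) (herr : errProb net p code s u ≤ ε) :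
    HN code p (insert (Sum.inl s) (atNode net u)) ≤ HN code p (atNode net u) +
      ((2 * Real.sqrt ε + ε) / Real.log 2 + ε * (N * Real.logb 2 (Fintype.card (𝒴 s)))) := by
  classical
  have hμ := blockPMF_isPMF hp N
  set μ := blockPMF p N with hμdef
  -- the decoded block and the error indicator
  set dOut : (Fin N → ∀ s, 𝒴 s) → (Fin N → 𝒴 s) := fun y =>
    code.dec s u (fun (s' : {s' : S // u ∈ net.src s'}) n => y n s'.1)
      (fun (f : {f : E // net.head f = u}) => code.g f.1 (fun s'' n => y n s'')) with hdOut
  set Yb : (Fin N → ∀ s, 𝒴 s) → (Fin N → 𝒴 s) := fun y n => y n s with hYb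
  set B : (Fin N → ∀ s, 𝒴 s) → Bool := fun y => if dOut y ≠ Yb y then true else false with hB
  set W := XA code (atNode net u) with hW
  -- error probability is the mass of B
  have hqeq : probOf μ {y | B y = true} = errProb net p code s u := by
    have : {y | B y = true} = {y | dOut y ≠ Yb y} := by
      ext y
      simp only [Set.mem_setOf_eq, hB]
      by_cases hd : dOut y ≠ Yb y <;> simp [hd]
    rw [this]
    rfl
  have hq1 : probOf μ {y | B y = true} ≤ ε := by rw [hqeq]; exact herr
  -- dOut is a function of W
  have hdet0 : ∀ y y', W y = W y' → dOut y = dOut y' := by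
    intro y y' hyy
    rw [hW, XA_eq_iff] at hyy
    have h1 : (fun (s' : {s' : S // u ∈ net.src s'}) (n : Fin N) => y n s'.1) =
        (fun (s' : {s' : S // u ∈ net.src s'}) (n : Fin N) => y' n s'.1) := by
      funext s' n
      exact congrFun (hyy (Sum.inl s'.1) (mem_atNode_inl s'.2)) n
    have h2 : (fun (f : {f : E // net.head f = u}) => code.g f.1 (fun s'' n => y n s'')) =
        (fun (f : {f : E // net.head f = u}) => code.g f.1 (fun s'' n => y' n s'')) := by
      funext f
      exact hyy (Sum.inr f.1) (mem_atNode_inr f.2)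
    rw [hdOut]
    simp only
    rw [h1, h2]
  -- step 1 : H(insert) = H(W, Yb)
  have e1 : HN code p (insert (Sum.inl s) (atNode net u)) =
      shEntropy μ (fun y => (W y, Yb y)) := by
    refine shEntropy_congr hμ ?_
    intro y y'
    simp only [XA_eq_iff, Prod.mk.injEq, hW]
    constructor
    · intro h
      refine ⟨fun z hz => h z (Finset.mem_insert_of_mem hz), ?_⟩
      have := h (Sum.inl s) (Finset.mem_insert_self _ _)
      exact this
    · rintro ⟨h1, h2⟩ z hz
      rcases Finset.mem_insert.mp hz with rfl | hz
      · exact h2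
      · exact h1 z hz
  -- step 2 : H(W, Yb) = H((W, B), Yb)
  have e2 : shEntropy μ (fun y => (W y, Yb y)) =
      shEntropy μ (fun y => ((W y, B y), Yb y)) := by
    refine shEntropy_congr hμ ?_
    intro y y'
    simp only [Prod.mk.injEq]
    constructor
    · rintro ⟨h1, h2⟩
      refine ⟨⟨h1, ?_⟩, h2⟩
      rw [hB]
      simp only
      rw [hdet0 y y' h1, h2]
    · rintro ⟨⟨h1, _⟩, h2⟩
      exact ⟨h1, h2⟩
  -- step 3 : Fano
  have e3 : shEntropy μ (fun y => ((W y, B y), Yb y)) ≤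
      shEntropy μ (fun y => (W y, B y)) +
        probOf μ {y | B y = true} * Real.logb 2 (Fintype.card (Fin N → 𝒴 s)) := by
    have hdet : ∀ y y', (fun y => (W y, B y)) y = (fun y => (W y, B y)) y' →
        ¬ ((fun v : _ × Bool => v.2 = true) ((fun y => (W y, B y)) y)) → Yb y = Yb y' := by
      intro y y' hyy hG
      simp only [Prod.mk.injEq] at hyy
      have hBy : B y = false := by simpa using hG
      have hBy' : B y' = false := by rw [← hyy.2]; exact hBy
      have hd : dOut y = Yb y := by
        by_contra hc
        have hbt : B y = true := by rw [hB]; simp [hc]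
        rw [hBy] at hbt
        exact Bool.false_ne_true hbt
      have hd' : dOut y' = Yb y' := by
        by_contra hc
        have hbt : B y' = true := by rw [hB]; simp [hc]
        rw [hBy'] at hbt
        exact Bool.false_ne_true hbt
      rw [← hd, ← hd']
      exact hdet0 y y' hyy.1
    have := shEntropy_pair_le hμ (fun y => (W y, B y)) Yb
      (fun v => v.2 = true) hdet
    have hset : {y | (W y, B y).2 = true} = {y | B y = true} := rfl
    rw [hset] at this
    exact this
  -- step 4 : subadditivity for the error bit
  have e4 : shEntropy μ (fun y => (W y, B y)) ≤ shEntropy μ W + shEntropy μ B :=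
    shEntropy_subadd hμ W B
  -- step 5 : binary entropy bound
  have e5 : shEntropy μ B ≤ (2 * Real.sqrt ε + ε) / Real.log 2 :=
    shEntropy_bool_le hμ B hq1 hε0 hε2
  -- the cardinality
  have hcard : Real.logb 2 (Fintype.card (Fin N → 𝒴 s)) =
      N * Real.logb 2 (Fintype.card (𝒴 s)) := by
    rw [Fintype.card_fun, Fintype.card_fin]
    push_cast
    rw [Real.logb_pow]
  have hNempty : Nonempty (Fin N → ∀ s, 𝒴 s) := by
    by_contra hne
    rw [not_nonempty_iff] at hne
    have := hμ.2
    rw [Finset.univ_eq_empty, Finset.sum_empty] at this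
    norm_num at this
  have hYs : Nonempty (𝒴 s) := by
    obtain ⟨y⟩ := hNempty
    exact ⟨y ⟨0, hN0⟩ s⟩
  have hlogY : 0 ≤ Real.logb 2 (Fintype.card (𝒴 s)) := by
    refine Real.logb_nonneg (by norm_num) ?_
    exact_mod_cast Fintype.card_pos
  have hq0 : 0 ≤ probOf μ {y | B y = true} := probOf_nonneg hμ.1 _
  have hfinal : probOf μ {y | B y = true} * Real.logb 2 (Fintype.card (Fin N → 𝒴 s)) ≤
      ε * (N * Real.logb 2 (Fintype.card (𝒴 s))) := by
    rw [hcard]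
    refine mul_le_mul_of_nonneg_right hq1 ?_
    positivity
  have hHW : HN code p (atNode net u) = shEntropy μ W := rfl
  rw [e1, e2, hHW]
  calc shEntropy μ (fun y => ((W y, B y), Yb y)) ≤
      shEntropy μ (fun y => (W y, B y)) +
        probOf μ {y | B y = true} * Real.logb 2 (Fintype.card (Fin N → 𝒴 s)) := e3
    _ ≤ shEntropy μ W + shEntropy μ B +
        probOf μ {y | B y = true} * Real.logb 2 (Fintype.card (Fin N → 𝒴 s)) := by linarith
    _ ≤ shEntropy μ W + ((2 * Real.sqrt ε + ε) / Real.log 2 +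
        ε * (N * Real.logb 2 (Fintype.card (𝒴 s)))) := by linarith

end Master

end NetLP

namespace NetLP
open Finset Real Filter

variable {V S E : Type} [Fintype S] [DecidableEq S] [Fintype E] [DecidableEq E]
  {𝒴 : S → Type} [∀ s, Fintype (𝒴 s)]

lemma exists_good (net : Network V S E)
    {p : (∀ s, 𝒴 s) → ℝ} (hp : IsPMF p) (C : E → ℝ)
    {ε : ℝ} (hε0 : 0 < ε) (hε2 : ε ≤ 1/2)
    (hach : Achievable net 𝒴 p C) :
    ∃ h : Finset (S ⊕ E) → ℝ, IsPolymatroid h ∧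
      (∀ α : Finset S,
        h (α.image Sum.inl) = shEntropy p (fun y (s : {x // x ∈ α}) => y s.1)) ∧
      (∀ e : E, h (insert (Sum.inr e) (inEdges net e)) = h (inEdges net e)) ∧
      (∀ s : S, ∀ u ∈ net.snk s,
        h (insert (Sum.inl s) (atNode net u)) ≤ h (atNode net u) +
          ((2 * Real.sqrt ε + ε) / Real.log 2 + ε * Real.logb 2 (Fintype.card (𝒴 s)))) ∧
      (∀ e : E, h {Sum.inr e} ≤ C e + ε) ∧
      (∀ A, h A ≤ shEntropy p
          (fun y (s : {x // x ∈ (Finset.univ : Finset S)}) => y s.1) + ∑ e : E, (C e + 1)) := by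
  classical
  obtain ⟨N, hN0, code, hrate, herr⟩ := hach ε hε0
  have hNpos : (0:ℝ) < N := by exact_mod_cast hN0
  have hN1 : (1:ℝ) ≤ N := by exact_mod_cast hN0
  refine ⟨fun A => HN code p A / N, ?_, ?_, ?_, ?_, ?_, ?_⟩
  · -- polymatroid
    refine ⟨?_, ?_, ?_, ?_⟩
    · show HN code p (∅ : Finset (S ⊕ E)) / (N:ℝ) = 0
      rw [HN_empty hp, zero_div]
    · intro A
      exact div_nonneg (HN_nonneg hp A) hNpos.le
    · intro A B hAB
      exact div_le_div_of_nonneg_right (HN_coarser hp hAB) hNpos.le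
    · intro A B
      show HN code p (A ∩ B) / (N:ℝ) + HN code p (A ∪ B) / (N:ℝ) ≤
        HN code p A / (N:ℝ) + HN code p B / (N:ℝ)
      rw [← add_div, ← add_div]
      exact div_le_div_of_nonneg_right (HN_submod hp A B) hNpos.le
  · -- source entropies
    intro α
    show HN code p (α.image Sum.inl) / (N:ℝ) =
      shEntropy p (fun y (s : {x // x ∈ α}) => y s.1)
    rw [HN_sources hp α, mul_comm, mul_div_assoc, div_self hNpos.ne', mul_one]
  · -- encoding
    intro e
    show HN code p (insert (Sum.inr e) (inEdges net e)) / (N:ℝ) =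
      HN code p (inEdges net e) / (N:ℝ)
    rw [HN_encode hp e]
  · -- decoding
    intro s u hu
    have hdec := HN_decode (code := code) hp hN0 s u hε0.le hε2 (herr s u hu)
    have harith : (HN code p (atNode net u) +
        ((2 * Real.sqrt ε + ε) / Real.log 2 + ε * (N * Real.logb 2 (Fintype.card (𝒴 s))))) / N ≤
        HN code p (atNode net u) / N +
        ((2 * Real.sqrt ε + ε) / Real.log 2 + ε * Real.logb 2 (Fintype.card (𝒴 s))) := by
      have hc1 : 0 ≤ (2 * Real.sqrt ε + ε) / Real.log 2 := by
        have : 0 < Real.log 2 := Real.log_pos (by norm_num)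
        positivity
      rw [add_div, add_div]
      have e1 : (2 * Real.sqrt ε + ε) / Real.log 2 / N ≤ (2 * Real.sqrt ε + ε) / Real.log 2 :=
        div_le_self hc1 hN1
      have e2 : ε * (N * Real.logb 2 (Fintype.card (𝒴 s))) / N =
          ε * Real.logb 2 (Fintype.card (𝒴 s)) := by
        rw [mul_comm (N:ℝ) _, ← mul_assoc, mul_div_assoc, div_self hNpos.ne', mul_one]
      rw [e2]
      linarith
    calc HN code p (insert (Sum.inl s) (atNode net u)) / N ≤
        (HN code p (atNode net u) +
          ((2 * Real.sqrt ε + ε) / Real.log 2 +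
            ε * (N * Real.logb 2 (Fintype.card (𝒴 s))))) / N :=
          div_le_div_of_nonneg_right hdec hNpos.le
      _ ≤ _ := harith
  · -- rates
    intro e
    calc HN code p {Sum.inr e} / N ≤
        Real.logb 2 (@Fintype.card (code.U e) (code.fintU e)) / N :=
          div_le_div_of_nonneg_right (HN_rate hp e) hNpos.le
      _ ≤ C e + ε := hrate e
  · -- uniform bound
    intro A
    have hmono : ∀ A B : Finset (S ⊕ E), A ⊆ B → HN code p A / N ≤ HN code p B / N :=
      fun A B hAB => div_le_div_of_nonneg_right (HN_coarser hp hAB) hNpos.le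
    have hsub2 : ∀ A B : Finset (S ⊕ E),
        HN code p (A ∪ B) / N ≤ HN code p A / N + HN code p B / N := by
      intro A B
      have := HN_submod (code := code) hp A B
      have h0 := HN_nonneg (code := code) hp (A ∩ B)
      rw [← add_div]
      refine le_trans (div_le_div_of_nonneg_right ?_ hNpos.le) (le_refl _)
      linarith
    have hsingles : ∀ A : Finset (S ⊕ E), HN code p A / N ≤ ∑ z ∈ A, HN code p {z} / N := by
      intro A
      induction A using Finset.induction_on with
      | empty => rw [HN_empty hp, zero_div, Finset.sum_empty]
      | @insert z A' hz ih =>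
        rw [Finset.sum_insert hz]
        calc HN code p (insert z A') / N = HN code p ({z} ∪ A') / N := by
              rw [← Finset.insert_eq]
          _ ≤ HN code p {z} / N + HN code p A' / N := hsub2 _ _
          _ ≤ HN code p {z} / N + ∑ z ∈ A', HN code p {z} / N := by linarith
    have huniv : (Finset.univ : Finset (S ⊕ E)) =
        (Finset.univ.image Sum.inl) ∪ (Finset.univ.image Sum.inr) := by
      ext z
      cases z with
      | inl s => simp
      | inr e => simp
    calc HN code p A / N ≤ HN code p Finset.univ / N := hmono _ _ (Finset.subset_univ A)
      _ = HN code p ((Finset.univ.image Sum.inl) ∪ (Finset.univ.image Sum.inr)) / N := by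
          rw [← huniv]
      _ ≤ HN code p (Finset.univ.image Sum.inl) / N +
          HN code p (Finset.univ.image Sum.inr) / N := hsub2 _ _
      _ ≤ shEntropy p (fun y (s : {x // x ∈ (Finset.univ : Finset S)}) => y s.1) +
          ∑ e : E, (C e + 1) := by
          have hA1 : HN code p ((Finset.univ : Finset S).image Sum.inl) / N =
              shEntropy p (fun y (s : {x // x ∈ (Finset.univ : Finset S)}) => y s.1) := by
            rw [HN_sources hp Finset.univ, mul_comm, mul_div_assoc, div_self hNpos.ne', mul_one]
          have hA2 : HN code p (Finset.univ.image Sum.inr) / N ≤ ∑ e : E, (C e + 1) := by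
            refine le_trans (hsingles _) ?_
            rw [Finset.sum_image (fun a _ b _ hab => Sum.inr_injective hab)]
            refine Finset.sum_le_sum fun e _ => ?_
            calc HN code p {Sum.inr e} / N ≤
                Real.logb 2 (@Fintype.card (code.U e) (code.fintU e)) / N :=
                  div_le_div_of_nonneg_right (HN_rate hp e) hNpos.le
              _ ≤ C e + ε := hrate e
              _ ≤ C e + 1 := by linarith
          rw [hA1]
          linarith
end NetLP

/-- LP outer bound, Theorem 1 of the paper: if the capacity
tuple `C` is achievable for a network with correlated sources, then there is a
polymatroid `h` on the ground set `S ⊕ E` which matches the joint source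
entropies on subsets of `S`, respects the functional (encoding and decoding)
constraints, and satisfies `h(e) ≤ C e` on every edge; i.e.
`R_cs ⊆ R_cs(Γ)`. -/
theorem achievable_implies_LP_outer_bound
    {V S E : Type} [Fintype S] [Fintype E] [DecidableEq S] [DecidableEq E]
    (net : Network V S E) (𝒴 : S → Type) [∀ s, Fintype (𝒴 s)]
    (p : (∀ s, 𝒴 s) → ℝ) (hp : IsPMF p)
    (C : E → ℝ) (hCpos : ∀ e, 0 < C e)
    (hach : Achievable net 𝒴 p C) :
    ∃ h : Finset (S ⊕ E) → ℝ, IsPolymatroid h ∧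
      (∀ α : Finset S,
        h (α.image Sum.inl) = shEntropy p (fun y (s : {x // x ∈ α}) => y s.1)) ∧
      (∀ e : E, h (insert (Sum.inr e) (inEdges net e)) = h (inEdges net e)) ∧
      (∀ s : S, ∀ u ∈ net.snk s,
        h (insert (Sum.inl s) (atNode net u)) = h (atNode net u)) ∧
      (∀ e : E, h {Sum.inr e} ≤ C e) := by
  classical
  -- a vanishing sequence of tolerances
  set εs : ℕ → ℝ := fun k => (1/2) * (1/((k:ℝ)+1)) with hεs
  have hεs0 : ∀ k, 0 < εs k := by
    intro k
    rw [hεs]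
    positivity
  have hεs2 : ∀ k, εs k ≤ 1/2 := by
    intro k
    rw [hεs]
    have h1 : (1:ℝ)/((k:ℝ)+1) ≤ 1 := by
      rw [div_le_one (by positivity)]
      linarith [Nat.cast_nonneg (α := ℝ) k]
    nlinarith
  have hεstend : Filter.Tendsto εs Filter.atTop (nhds 0) := by
    have h1 : Filter.Tendsto (fun k : ℕ => 1/((k:ℝ)+1)) Filter.atTop (nhds 0) :=
      tendsto_one_div_add_atTop_nhds_zero_nat
    have := h1.const_mul (1/2 : ℝ)
    simpa [hεs] using this
  -- approximating polymatroids
  have hex : ∀ k : ℕ, ∃ h : Finset (S ⊕ E) → ℝ, IsPolymatroid h ∧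
      (∀ α : Finset S,
        h (α.image Sum.inl) = shEntropy p (fun y (s : {x // x ∈ α}) => y s.1)) ∧
      (∀ e : E, h (insert (Sum.inr e) (inEdges net e)) = h (inEdges net e)) ∧
      (∀ s : S, ∀ u ∈ net.snk s,
        h (insert (Sum.inl s) (atNode net u)) ≤ h (atNode net u) +
          ((2 * Real.sqrt (εs k) + εs k) / Real.log 2 +
            εs k * Real.logb 2 (Fintype.card (𝒴 s)))) ∧
      (∀ e : E, h {Sum.inr e} ≤ C e + εs k) ∧
      (∀ A, h A ≤ shEntropy p
          (fun y (s : {x // x ∈ (Finset.univ : Finset S)}) => y s.1) + ∑ e : E, (C e + 1)) :=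
    fun k => NetLP.exists_good net hp C (hεs0 k) (hεs2 k) hach
  choose hs hP using hex
  -- a convergent subsequence inside a compact box
  set Rb : ℝ := shEntropy p
      (fun y (s : {x // x ∈ (Finset.univ : Finset S)}) => y s.1) + ∑ e : E, (C e + 1) with hRb
  have hbox : ∀ k, hs k ∈ Set.Icc (fun _ : Finset (S ⊕ E) => (0:ℝ)) (fun _ => Rb) := by
    intro k
    rw [Set.mem_Icc]
    constructor
    · intro A
      exact (hP k).1.2.1 A
    · intro A
      exact (hP k).2.2.2.2.2 A
  obtain ⟨h, -, φ, hφ, hconv⟩ := (isCompact_Icc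
    (a := fun _ : Finset (S ⊕ E) => (0:ℝ)) (b := fun _ => Rb)).tendsto_subseq hbox
  have hcoord : ∀ A : Finset (S ⊕ E),
      Filter.Tendsto (fun k => hs (φ k) A) Filter.atTop (nhds (h A)) :=
    fun A => tendsto_pi_nhds.mp hconv A
  -- the tolerances vanish along the subsequence
  have hεφ : Filter.Tendsto (fun k => εs (φ k)) Filter.atTop (nhds 0) :=
    hεstend.comp hφ.tendsto_atTop
  -- the polymatroid axioms in the limit
  have hpoly : IsPolymatroid h := by
    refine ⟨?_, ?_, ?_, ?_⟩
    · have hz : (fun k => hs (φ k) (∅ : Finset (S ⊕ E))) = fun _ => 0 :=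
        funext fun k => (hP (φ k)).1.1
      have h2 : Filter.Tendsto (fun k => hs (φ k) (∅ : Finset (S ⊕ E)))
          Filter.atTop (nhds 0) := by
        rw [hz]; exact tendsto_const_nhds
      exact tendsto_nhds_unique (hcoord ∅) h2
    · intro A
      exact le_of_tendsto_of_tendsto' tendsto_const_nhds (hcoord A)
        (fun k => (hP (φ k)).1.2.1 A)
    · intro A B hAB
      exact le_of_tendsto_of_tendsto' (hcoord A) (hcoord B)
        (fun k => (hP (φ k)).1.2.2.1 A B hAB)
    · intro A B
      exact le_of_tendsto_of_tendsto' ((hcoord (A ∩ B)).add (hcoord (A ∪ B)))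
        ((hcoord A).add (hcoord B)) (fun k => (hP (φ k)).1.2.2.2 A B)
  refine ⟨h, hpoly, ?_, ?_, ?_, ?_⟩
  · -- source entropies
    intro α
    have hz : (fun k => hs (φ k) (α.image Sum.inl)) =
        fun _ => shEntropy p (fun y (s : {x // x ∈ α}) => y s.1) :=
      funext fun k => (hP (φ k)).2.1 α
    have h2 : Filter.Tendsto (fun k => hs (φ k) (α.image Sum.inl)) Filter.atTop
        (nhds (shEntropy p (fun y (s : {x // x ∈ α}) => y s.1))) := by
      rw [hz]; exact tendsto_const_nhds
    exact tendsto_nhds_unique (hcoord _) h2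
  · -- encoding constraints
    intro e
    have hz : (fun k => hs (φ k) (insert (Sum.inr e) (inEdges net e))) =
        fun k => hs (φ k) (inEdges net e) :=
      funext fun k => (hP (φ k)).2.2.1 e
    have h2 : Filter.Tendsto (fun k => hs (φ k) (insert (Sum.inr e) (inEdges net e)))
        Filter.atTop (nhds (h (inEdges net e))) := by
      rw [hz]; exact hcoord _
    exact tendsto_nhds_unique (hcoord _) h2
  · -- decoding constraints
    intro s u hu
    refine le_antisymm ?_ (hpoly.2.2.1 _ _ (Finset.subset_insert _ _))
    have herrtend : Filter.Tendsto (fun k =>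
        (2 * Real.sqrt (εs (φ k)) + εs (φ k)) / Real.log 2 +
          εs (φ k) * Real.logb 2 (Fintype.card (𝒴 s))) Filter.atTop (nhds 0) := by
      have hsq : Filter.Tendsto (fun k => Real.sqrt (εs (φ k))) Filter.atTop (nhds 0) := by
        have := hεφ.sqrt
        simpa using this
      have h1 := (((hsq.const_mul 2).add hεφ).div_const (Real.log 2)).add
        (hεφ.mul_const (Real.logb 2 (Fintype.card (𝒴 s))))
      simpa using h1
    have hle := le_of_tendsto_of_tendsto'
      (hcoord (insert (Sum.inl s) (atNode net u)))
      ((hcoord (atNode net u)).add herrtend)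
      (fun k => (hP (φ k)).2.2.2.1 s u hu)
    simpa using hle
  · -- capacity constraints
    intro e
    have hle := le_of_tendsto_of_tendsto' (hcoord {Sum.inr e})
      (tendsto_const_nhds.add hεφ)
      (fun k => (hP (φ k)).2.2.2.2.1 e)
    simpa using hle
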